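/- arXiv:2102.01725 — 3 statements merged into one kernel-verified Lean document; each statement's English description precedes it below -/
import Mathlib

section
/- In the weighted Hardy space H²_ω, the n-th optimal polynomial approximant of 1/(1−z) is q_n(z) = Σ_{k=0}^n (1 − (Σ_{j=0}^k 1/ω_j)/(Σ_{j=0}^{n+1} 1/ω_j)) z^k. -/
open scoped BigOperators
open Polynomial Filter

noncomputable section

/-- Coefficient sequence of the product p·f, where f is an analytic function on the disk
given by its Taylor coefficient sequence. -/
def polyMulSeq (p : Polynomial ℂ) (f : ℕ → ℂ) : ℕ → ℂ :=
  fun n => ∑ j ∈ Finset.range (n + 1), p.coeff j * f (n - j)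

/-- The constant function 1 as a Taylor coefficient sequence. -/
def oneSeq : ℕ → ℂ := fun n => if n = 0 then 1 else 0

/-- Membership in the weighted Hardy space H²_ω. -/
def MemHw (ω : ℕ → ℝ) (f : ℕ → ℂ) : Prop :=
  Summable (fun k => ‖f k‖ ^ 2 * ω k)

/-- Squared weighted norm ‖f‖²_ω. -/
def wNormSq (ω : ℕ → ℝ) (f : ℕ → ℂ) : ℝ := ∑' k, ‖f k‖ ^ 2 * ω k

/-- Weighted inner product ⟨f,g⟩_ω. -/
def wInner (ω : ℕ → ℝ) (f g : ℕ → ℂ) : ℂ :=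
  ∑' k, f k * (starRingEnd ℂ) (g k) * (ω k : ℂ)

/-- `q` is the n-th optimal polynomial approximant of 1/f in H²_ω. -/
def IsOPA (ω : ℕ → ℝ) (f : ℕ → ℂ) (n : ℕ) (q : Polynomial ℂ) : Prop :=
  q.natDegree ≤ n ∧
  ∀ p : Polynomial ℂ, p.natDegree ≤ n →
    wNormSq ω (polyMulSeq q f - oneSeq) ≤ wNormSq ω (polyMulSeq p f - oneSeq)

lemma fseq_mul (p : Polynomial ℂ) (m : ℕ) :
    polyMulSeq p (fun k => if k = 0 then 1 else if k = 1 then -1 else 0) m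
      = p.coeff m - (if m = 0 then 0 else p.coeff (m - 1)) := by
  unfold polyMulSeq
  match m with
  | 0 => simp
  | (m+1) =>
    rw [Finset.sum_range_succ, Finset.sum_range_succ]
    have h0 : ∀ j ∈ Finset.range m,
        p.coeff j * (if m + 1 - j = 0 then (1:ℂ) else if m + 1 - j = 1 then -1 else 0) = 0 := by
      intro j hj
      simp only [Finset.mem_range] at hj
      have h1 : m + 1 - j ≠ 0 := by omega
      have h2 : m + 1 - j ≠ 1 := by omega
      simp [h1, h2]
    rw [Finset.sum_eq_zero h0]
    simp
    ring

lemma g_eq (p : Polynomial ℂ) (m : ℕ) :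
    (polyMulSeq p (fun k => if k = 0 then 1 else if k = 1 then -1 else 0) - oneSeq) m
      = p.coeff m - (if m = 0 then 0 else p.coeff (m - 1)) - (if m = 0 then 1 else 0) := by
  simp only [Pi.sub_apply, fseq_mul, oneSeq]

lemma g_vanish (p : Polynomial ℂ) {n : ℕ} (hp : p.natDegree ≤ n) {m : ℕ} (hm : n + 2 ≤ m) :
    (polyMulSeq p (fun k => if k = 0 then 1 else if k = 1 then -1 else 0) - oneSeq) m = 0 := by
  rw [g_eq]
  have h0 : m ≠ 0 := by omega
  have h1 : p.coeff m = 0 := Polynomial.coeff_eq_zero_of_natDegree_lt (by omega)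
  have h2 : p.coeff (m - 1) = 0 := Polynomial.coeff_eq_zero_of_natDegree_lt (by omega)
  simp [h0, h1, h2]

lemma g_sum (p : Polynomial ℂ) {n : ℕ} (hp : p.natDegree ≤ n) :
    ∑ m ∈ Finset.range (n + 2),
      (polyMulSeq p (fun k => if k = 0 then 1 else if k = 1 then -1 else 0) - oneSeq) m = -1 := by
  simp only [g_eq]
  rw [Finset.sum_sub_distrib, Finset.sum_sub_distrib]
  have h1 : ∑ m ∈ Finset.range (n + 2), (if m = 0 then (0:ℂ) else p.coeff (m - 1))
      = ∑ m ∈ Finset.range (n + 1), p.coeff m := by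
    rw [Finset.sum_range_succ']
    simp
  have h2 : ∑ m ∈ Finset.range (n + 2), (if m = 0 then (1:ℂ) else 0) = 1 := by
    rw [Finset.sum_range_succ']
    simp
  rw [h1, h2, Finset.sum_range_succ]
  have h3 : p.coeff (n + 1) = 0 := Polynomial.coeff_eq_zero_of_natDegree_lt (by omega)
  rw [h3]
  ring

lemma wNormSq_fin (ω : ℕ → ℝ) (p : Polynomial ℂ) {n : ℕ} (hp : p.natDegree ≤ n) :
    wNormSq ω (polyMulSeq p (fun k => if k = 0 then 1 else if k = 1 then -1 else 0) - oneSeq)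
      = ∑ m ∈ Finset.range (n + 2),
          ‖(polyMulSeq p (fun k => if k = 0 then 1 else if k = 1 then -1 else 0) - oneSeq) m‖ ^ 2 * ω m := by
  unfold wNormSq
  apply tsum_eq_sum
  intro m hm
  rw [g_vanish p hp (by simpa [Finset.mem_range] using hm)]
  simp

lemma cs_bound (ω : ℕ → ℝ) (hωpos : ∀ k, 0 < ω k) (N : ℕ) (g : ℕ → ℂ)
    (hsum : ∑ m ∈ Finset.range N, g m = -1) :
    1 / (∑ j ∈ Finset.range N, 1 / ω j) ≤ ∑ m ∈ Finset.range N, ‖g m‖ ^ 2 * ω m := by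
  set S : ℝ := ∑ j ∈ Finset.range N, 1 / ω j with hS
  have hN : N ≠ 0 := by rintro rfl; simp at hsum
  have hSpos : 0 < S := Finset.sum_pos (fun j _ => one_div_pos.mpr (hωpos j)) (by simp [Finset.nonempty_range_iff, hN])
  have h1 : (1:ℝ) ≤ ∑ m ∈ Finset.range N, ‖g m‖ := by
    calc (1:ℝ) = ‖∑ m ∈ Finset.range N, g m‖ := by rw [hsum]; simp
    _ ≤ ∑ m ∈ Finset.range N, ‖g m‖ := norm_sum_le _ _
  have hcs := Finset.sum_mul_sq_le_sq_mul_sq (Finset.range N)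
    (fun m => ‖g m‖ * Real.sqrt (ω m)) (fun m => 1 / Real.sqrt (ω m))
  have heq : ∀ m ∈ Finset.range N,
      (‖g m‖ * Real.sqrt (ω m)) * (1 / Real.sqrt (ω m)) = ‖g m‖ := by
    intro m _
    have : Real.sqrt (ω m) ≠ 0 := ne_of_gt (Real.sqrt_pos.mpr (hωpos m))
    field_simp
  rw [Finset.sum_congr rfl heq] at hcs
  have heq2 : ∀ m ∈ Finset.range N, (‖g m‖ * Real.sqrt (ω m)) ^ 2 = ‖g m‖ ^ 2 * ω m := by
    intro m _
    rw [mul_pow, Real.sq_sqrt (hωpos m).le]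
  have heq3 : ∀ m ∈ Finset.range N, (1 / Real.sqrt (ω m)) ^ 2 = 1 / ω m := by
    intro m _
    rw [div_pow, one_pow, Real.sq_sqrt (hωpos m).le]
  rw [Finset.sum_congr rfl heq2, Finset.sum_congr rfl heq3, ← hS] at hcs
  have h2 : (1:ℝ) ≤ (∑ m ∈ Finset.range N, ‖g m‖ ^ 2 * ω m) * S := by
    calc (1:ℝ) = 1 ^ 2 := by ring
    _ ≤ (∑ m ∈ Finset.range N, ‖g m‖) ^ 2 := by
        apply pow_le_pow_left₀ (by norm_num) h1
    _ ≤ _ := hcs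
  rw [div_le_iff₀ hSpos] at *
  linarith [h2]

lemma q_coeff (ω : ℕ → ℝ) (S : ℝ) (n m : ℕ) :
    (∑ k ∈ Finset.range (n + 1),
        Polynomial.C
          ((1 - (∑ j ∈ Finset.range (k + 1), 1 / ω j) / S : ℝ) : ℂ) * Polynomial.X ^ k).coeff m
      = if m ≤ n then ((1 - (∑ j ∈ Finset.range (m + 1), 1 / ω j) / S : ℝ) : ℂ) else 0 := by
  rw [Polynomial.finset_sum_coeff]
  simp only [Polynomial.coeff_C_mul, Polynomial.coeff_X_pow, mul_ite, mul_one, mul_zero]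
  rw [Finset.sum_ite_eq (Finset.range (n + 1)) m]
  simp [Nat.lt_succ_iff]

lemma q_natDegree (ω : ℕ → ℝ) (n : ℕ) :
    (∑ k ∈ Finset.range (n + 1),
        Polynomial.C
          ((1 - (∑ j ∈ Finset.range (k + 1), 1 / ω j) /
              (∑ j ∈ Finset.range (n + 2), 1 / ω j) : ℝ) : ℂ) * Polynomial.X ^ k).natDegree ≤ n := by
  apply Polynomial.natDegree_sum_le_of_forall_le
  intro k hk
  exact le_trans (Polynomial.natDegree_C_mul_X_pow_le _ _) (by simpa [Nat.lt_succ_iff] using hk)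

lemma q_g (ω : ℕ → ℝ) (hωpos : ∀ k, 0 < ω k) (n m : ℕ) (hm : m < n + 2) :
    (polyMulSeq (∑ k ∈ Finset.range (n + 1),
        Polynomial.C
          ((1 - (∑ j ∈ Finset.range (k + 1), 1 / ω j) /
              (∑ j ∈ Finset.range (n + 2), 1 / ω j) : ℝ) : ℂ) * Polynomial.X ^ k)
        (fun k => if k = 0 then 1 else if k = 1 then -1 else 0) - oneSeq) m
      = ((-(1 / ω m) / (∑ j ∈ Finset.range (n + 2), 1 / ω j) : ℝ) : ℂ) := by
  have hSpos : 0 < ∑ j ∈ Finset.range (n + 2), 1 / ω j :=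
    Finset.sum_pos (fun j _ => one_div_pos.mpr (hωpos j))
      (by simp [Finset.nonempty_range_iff])
  obtain ⟨S, hS⟩ : ∃ S : ℝ, ∑ j ∈ Finset.range (n + 2), 1 / ω j = S := ⟨_, rfl⟩
  rw [hS] at hSpos ⊢
  rw [g_eq]
  match m, hm with
  | 0, _ =>
    rw [q_coeff]
    rw [if_pos (Nat.zero_le n), if_pos rfl, Finset.sum_range_one]
    push_cast
    ring
  | (s+1), hm =>
    have hs : s ≤ n := by omega
    rw [q_coeff, q_coeff]
    simp only [Nat.add_sub_cancel, if_pos hs, if_neg (by omega : ¬ s + 1 = 0)]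
    by_cases h : s + 1 ≤ n
    · rw [if_pos h]
      have hT : ∑ j ∈ Finset.range (s + 1 + 1), 1 / ω j
          = (∑ j ∈ Finset.range (s + 1), 1 / ω j) + 1 / ω (s + 1) := Finset.sum_range_succ _ _
      rw [hT]
      push_cast
      ring
    · have hsn : s = n := by omega
      rw [if_neg h]
      subst hsn
      have hT : (∑ j ∈ Finset.range (s + 1), 1 / ω j) + 1 / ω (s + 1) = S := by
        rw [← hS]; exact (Finset.sum_range_succ _ _).symm
      have h1 : ((1 : ℝ) - (∑ j ∈ Finset.range (s + 1), 1 / ω j) / S)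
          = (1 / ω (s + 1)) / S := by
        rw [sub_div' hSpos.ne']
        congr 1
        linarith [hT]
      rw [h1]
      push_cast
      ring

lemma q_norm (ω : ℕ → ℝ) (hωpos : ∀ k, 0 < ω k) (n : ℕ) :
    wNormSq ω (polyMulSeq (∑ k ∈ Finset.range (n + 1),
        Polynomial.C
          ((1 - (∑ j ∈ Finset.range (k + 1), 1 / ω j) /
              (∑ j ∈ Finset.range (n + 2), 1 / ω j) : ℝ) : ℂ) * Polynomial.X ^ k)
        (fun k => if k = 0 then 1 else if k = 1 then -1 else 0) - oneSeq)
      = 1 / (∑ j ∈ Finset.range (n + 2), 1 / ω j) := by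
  set S : ℝ := ∑ j ∈ Finset.range (n + 2), 1 / ω j with hS
  have hSpos : 0 < S := by
    rw [hS]
    exact Finset.sum_pos (fun j _ => one_div_pos.mpr (hωpos j))
      (by simp [Finset.nonempty_range_iff])
  rw [wNormSq_fin ω _ (q_natDegree ω n)]
  have : ∀ m ∈ Finset.range (n + 2),
      ‖(polyMulSeq (∑ k ∈ Finset.range (n + 1),
        Polynomial.C
          ((1 - (∑ j ∈ Finset.range (k + 1), 1 / ω j) /
              (∑ j ∈ Finset.range (n + 2), 1 / ω j) : ℝ) : ℂ) * Polynomial.X ^ k)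
        (fun k => if k = 0 then 1 else if k = 1 then -1 else 0) - oneSeq) m‖ ^ 2 * ω m
      = (1 / ω m) / S ^ 2 := by
    intro m hm
    rw [q_g ω hωpos n m (Finset.mem_range.mp hm)]
    rw [Complex.norm_real, Real.norm_eq_abs, sq_abs]
    have hω : ω m ≠ 0 := (hωpos m).ne'
    rw [← hS]
    field_simp
  rw [Finset.sum_congr rfl this, ← Finset.sum_div, ← hS]
  field_simp

/-- In H²_ω, the n-th opa of 1/(1-z) is
∑_{k=0}^n (1 - (∑_{j=0}^k 1/ω_j)/(∑_{j=0}^{n+1} 1/ω_j)) z^k. -/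
theorem stmt_4 (ω : ℕ → ℝ) (hω0 : ω 0 = 1) (hωpos : ∀ k, 0 < ω k) (n : ℕ) :
    IsOPA ω (fun k => if k = 0 then 1 else if k = 1 then -1 else 0) n
      (∑ k ∈ Finset.range (n + 1),
        Polynomial.C
          ((1 - (∑ j ∈ Finset.range (k + 1), 1 / ω j) /
              (∑ j ∈ Finset.range (n + 2), 1 / ω j) : ℝ) : ℂ) * Polynomial.X ^ k) := by
  constructor
  · exact q_natDegree ω n
  · intro p hp
    rw [q_norm ω hωpos n, wNormSq_fin ω p hp]
    exact cs_bound ω hωpos (n + 2) _ (g_sum p hp)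
end
end

section
/- In H²_ω with f(z) = 1 − z, the squared optimal distance satisfies ‖q_n f − 1‖²_ω = 1/(Σ_{k=0}^{n+1} 1/ω_k), where q_n is the n-th optimal polynomial approximant of 1/f. -/
open scoped BigOperators
open Polynomial Filter

noncomputable section

def fseq : ℕ → ℂ := fun k => if k = 0 then 1 else if k = 1 then -1 else 0

def useq (p : Polynomial ℂ) : ℕ → ℂ := fun m => if m = 0 then 1 else p.coeff (m - 1)

lemma coeff_eq (p : Polynomial ℂ) (m : ℕ) :
    (polyMulSeq p fseq - oneSeq) m = useq p (m + 1) - useq p m := by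
  rcases m with _ | k
  · simp [polyMulSeq, oneSeq, fseq, useq]
  · have h1 : (polyMulSeq p fseq) (k + 1)
        = ∑ j ∈ Finset.range (k + 2), p.coeff j * fseq (k + 1 - j) := rfl
    have hz : ∑ j ∈ Finset.range k, p.coeff j * fseq (k + 1 - j) = 0 := by
      apply Finset.sum_eq_zero
      intro j hj
      have hj' := Finset.mem_range.mp hj
      have h0 : k + 1 - j ≠ 0 := by omega
      have h1 : k + 1 - j ≠ 1 := by omega
      simp [fseq, h0, h1]
    rw [Pi.sub_apply, h1, Finset.sum_range_succ, Finset.sum_range_succ, hz]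
    simp [fseq, oneSeq, useq]
    ring

lemma norm_formula (ω : ℕ → ℝ) (n : ℕ) (p : Polynomial ℂ) (hp : p.natDegree ≤ n) :
    wNormSq ω (polyMulSeq p fseq - oneSeq)
      = ∑ k ∈ Finset.range (n + 2), ‖useq p (k + 1) - useq p k‖ ^ 2 * ω k := by
  unfold wNormSq
  rw [tsum_eq_sum (s := Finset.range (n + 2))]
  · exact Finset.sum_congr rfl fun k _ => by rw [coeff_eq]
  · intro k hk
    have hk' : n + 2 ≤ k := by
      by_contra h
      exact hk (Finset.mem_range.mpr (by omega))
    have h1 : useq p (k + 1) = 0 := by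
      simp only [useq, if_neg (by omega : ¬ k + 1 = 0)]
      exact Polynomial.coeff_eq_zero_of_natDegree_lt (by omega)
    have h2 : useq p k = 0 := by
      simp only [useq, if_neg (by omega : ¬ k = 0)]
      exact Polynomial.coeff_eq_zero_of_natDegree_lt (by omega)
    rw [coeff_eq, h1, h2]
    simp

lemma sum_coeffs (p : Polynomial ℂ) (hp : p.natDegree ≤ n) :
    ∑ k ∈ Finset.range (n + 2), (useq p (k + 1) - useq p k) = -1 := by
  rw [Finset.sum_range_sub (useq p)]
  have h1 : useq p (n + 2) = 0 := by
    simp only [useq, if_neg (by omega : ¬ n + 2 = 0)]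
    exact Polynomial.coeff_eq_zero_of_natDegree_lt (by omega)
  have h2 : useq p 0 = 1 := by simp [useq]
  rw [h1, h2]; ring

lemma lower_bound (ω : ℕ → ℝ) (hωpos : ∀ k, 0 < ω k) (n : ℕ) (p : Polynomial ℂ)
    (hp : p.natDegree ≤ n) :
    1 / (∑ k ∈ Finset.range (n + 2), 1 / ω k) ≤ wNormSq ω (polyMulSeq p fseq - oneSeq) := by
  set S := ∑ k ∈ Finset.range (n + 2), 1 / ω k with hS
  have hSpos : 0 < S := Finset.sum_pos (fun k _ => by have := hωpos k; positivity) ⟨0, by simp⟩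
  rw [norm_formula ω n p hp]
  set c : ℕ → ℂ := fun k => useq p (k + 1) - useq p k with hc
  have h1 : (1 : ℝ) ≤ ∑ k ∈ Finset.range (n + 2), ‖c k‖ := by
    calc (1 : ℝ) = ‖∑ k ∈ Finset.range (n + 2), c k‖ := by rw [sum_coeffs p hp]; simp
    _ ≤ ∑ k ∈ Finset.range (n + 2), ‖c k‖ := norm_sum_le _ _
  have hcs := Finset.sum_sq_le_sum_mul_sum_of_sq_eq_mul (Finset.range (n + 2))
      (r := fun k => ‖c k‖) (f := fun k => ‖c k‖ ^ 2 * ω k) (g := fun k => 1 / ω k)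
      (fun i _ => by have := hωpos i; positivity) (fun i _ => by have := hωpos i; positivity)
      (fun i _ => by have := (hωpos i).ne'; field_simp)
  have h2 : (1 : ℝ) ≤ (∑ k ∈ Finset.range (n + 2), ‖c k‖ ^ 2 * ω k) * S := by
    nlinarith [h1, hcs]
  rw [div_le_iff₀ hSpos]
  linarith

lemma coeff_mk (m : ℕ) (a : ℕ → ℂ) (k : ℕ) :
    (∑ j ∈ Finset.range m, C (a j) * X ^ j).coeff k = if k < m then a k else 0 := by
  simp [Polynomial.finset_sum_coeff, Polynomial.coeff_C_mul, Polynomial.coeff_X_pow,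
    mul_ite, Finset.sum_ite_eq, Finset.mem_range, eq_comm]

lemma upper_exists (ω : ℕ → ℝ) (hωpos : ∀ k, 0 < ω k) (n : ℕ) :
    ∃ p : Polynomial ℂ, p.natDegree ≤ n ∧
      wNormSq ω (polyMulSeq p fseq - oneSeq) = 1 / (∑ k ∈ Finset.range (n + 2), 1 / ω k) := by
  set S := ∑ k ∈ Finset.range (n + 2), 1 / ω k with hS
  have hSpos : 0 < S := Finset.sum_pos (fun k _ => by have := hωpos k; positivity) ⟨0, by simp⟩
  set aR : ℕ → ℝ := fun j => 1 - (∑ i ∈ Finset.range (j + 1), 1 / ω i) / S with haR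
  set p : Polynomial ℂ := ∑ j ∈ Finset.range (n + 1), C ((aR j : ℂ)) * X ^ j with hpdef
  have hcoeff : ∀ k, p.coeff k = if k < n + 1 then ((aR k : ℝ) : ℂ) else 0 :=
    fun k => coeff_mk _ _ k
  have hdeg : p.natDegree ≤ n := by
    rw [Polynomial.natDegree_le_iff_coeff_eq_zero]
    intro m hm
    rw [hcoeff, if_neg (by omega)]
  refine ⟨p, hdeg, ?_⟩
  rw [norm_formula ω n p hdeg]
  have hck : ∀ k ∈ Finset.range (n + 2),
      useq p (k + 1) - useq p k = (((-(1 / ω k) / S : ℝ)) : ℂ) := by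
    intro k hk
    have hk' : k < n + 2 := Finset.mem_range.mp hk
    have hu1 : useq p (k + 1) = p.coeff k := by simp [useq]
    rcases Nat.eq_zero_or_pos k with h0 | hpos
    · subst h0
      have hu0 : useq p 0 = 1 := by simp [useq]
      rw [hu1, hu0, hcoeff, if_pos (by omega)]
      have : aR 0 - 1 = -(1 / ω 0) / S := by
        simp [haR, Finset.sum_range_one]
        ring
      push_cast [← this]
      ring
    · have hu0 : useq p k = p.coeff (k - 1) := by simp [useq, Nat.pos_iff_ne_zero.mp hpos]
      rcases Nat.lt_or_ge k (n + 1) with hlt | hge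
      · rw [hu1, hu0, hcoeff, hcoeff, if_pos hlt, if_pos (by omega)]
        have : aR k - aR (k - 1) = -(1 / ω k) / S := by
          have hk1 : k - 1 + 1 = k := by omega
          simp only [haR, hk1]
          rw [show k + 1 = k + 1 from rfl, Finset.sum_range_succ]
          ring
        push_cast [← this]
        ring
      · have hkeq : k = n + 1 := by omega
        subst hkeq
        rw [hu1, hu0, hcoeff, hcoeff, if_neg (by omega), if_pos (by omega)]
        have hSsplit : S = (∑ i ∈ Finset.range (n + 1), 1 / ω i) + 1 / ω (n + 1) := by
          rw [hS, Finset.sum_range_succ]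
        have : -(aR (n + 1 - 1)) = -(1 / ω (n + 1)) / S := by
          have h1 : (n + 1 - 1 : ℕ) = n := by omega
          have key : ∑ i ∈ Finset.range (n + 1), 1 / ω i = S - 1 / ω (n + 1) := by
            linarith [hSsplit]
          rw [h1]
          simp only [haR, key]
          field_simp
          ring
        push_cast [← this]
        ring
  have hterm : ∀ k ∈ Finset.range (n + 2),
      ‖useq p (k + 1) - useq p k‖ ^ 2 * ω k = (1 / ω k) / S ^ 2 := by
    intro k hk
    rw [hck k hk]
    rw [Complex.norm_real, Real.norm_eq_abs, sq_abs]
    have hωne := (hωpos k).ne'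
    have hSne := hSpos.ne'
    field_simp
  rw [Finset.sum_congr rfl hterm]
  rw [← Finset.sum_div, ← hS]
  rw [sq]
  field_simp

/-- In H²_ω with f = 1 - z, ‖q_n f - 1‖²_ω = 1/(∑_{k=0}^{n+1} 1/ω_k). -/
theorem stmt_5 (ω : ℕ → ℝ) (hω0 : ω 0 = 1) (hωpos : ∀ k, 0 < ω k)
    (n : ℕ) (q : Polynomial ℂ)
    (hq : IsOPA ω (fun k => if k = 0 then 1 else if k = 1 then -1 else 0) n q) :
    wNormSq ω (polyMulSeq q (fun k => if k = 0 then 1 else if k = 1 then -1 else 0) - oneSeq)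
      = 1 / (∑ k ∈ Finset.range (n + 2), 1 / ω k) := by
  obtain ⟨pstar, hdeg, hval⟩ := upper_exists ω hωpos n
  exact le_antisymm (le_trans (hq.2 pstar hdeg) (le_of_eq hval))
    (lower_bound ω hωpos n q hq.1)
end
end

section
/- Let H²_ω be a weighted Hardy space with non-decreasing weights ω_k. Then for every nonzero f ∈ H²_ω with f(0) ≠ 0, every n ∈ ℕ, and every zero z₁ of the n-th optimal polynomial approximant q_n of 1/f, one has |z₁| ≥ 1. -/
open scoped BigOperators
open Polynomial Filter

noncomputable section

/-! ### Auxiliary development -/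

/-- shifted sequence: coefficients of z·f -/
def shiftSeq (f : ℕ → ℂ) : ℕ → ℂ := fun n => match n with | 0 => 0 | m+1 => f m

section aux

variable {ω : ℕ → ℝ} {f a b v : ℕ → ℂ}

lemma polyMulSeq_add (p q : Polynomial ℂ) (f : ℕ → ℂ) :
    polyMulSeq (p + q) f = polyMulSeq p f + polyMulSeq q f := by
  funext n
  simp [polyMulSeq, add_mul, Finset.sum_add_distrib]

lemma polyMulSeq_sub (p q : Polynomial ℂ) (f : ℕ → ℂ) :
    polyMulSeq (p - q) f = polyMulSeq p f - polyMulSeq q f := by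
  funext n
  simp [polyMulSeq, sub_mul, Finset.sum_sub_distrib]

lemma polyMulSeq_smul (c : ℂ) (p : Polynomial ℂ) (f : ℕ → ℂ) :
    polyMulSeq (c • p) f = c • polyMulSeq p f := by
  funext n
  simp [polyMulSeq, Finset.mul_sum, mul_assoc]

lemma polyMulSeq_C (c : ℂ) (f : ℕ → ℂ) : polyMulSeq (C c) f = c • f := by
  funext n
  rw [polyMulSeq, Finset.sum_eq_single 0]
  · simp
  · intro j _ hj; simp [coeff_C, hj]
  · intro h; simp at h

lemma polyMulSeq_X_mul (r : Polynomial ℂ) (f : ℕ → ℂ) :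
    polyMulSeq (X * r) f = shiftSeq (polyMulSeq r f) := by
  funext n
  cases n with
  | zero => simp [polyMulSeq, shiftSeq, Polynomial.mul_coeff_zero]
  | succ m =>
      simp only [polyMulSeq, shiftSeq]
      rw [Finset.sum_range_succ']
      simp [Polynomial.mul_coeff_zero, Polynomial.coeff_X_mul, Nat.succ_sub_succ]

lemma polyMulSeq_coeff (p : Polynomial ℂ) (f : ℕ → ℂ) (n : ℕ) :
    polyMulSeq p f n = PowerSeries.coeff n ((p : PowerSeries ℂ) * PowerSeries.mk f) := by
  rw [PowerSeries.coeff_mul, Finset.Nat.sum_antidiagonal_eq_sum_range_succ_mk]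
  simp [polyMulSeq, Polynomial.coeff_coe]

lemma polyMulSeq_ne_zero {p : Polynomial ℂ} (hp : p ≠ 0) (hf : f ≠ 0) :
    polyMulSeq p f ≠ 0 := by
  intro h
  have hps : (p : PowerSeries ℂ) * PowerSeries.mk f = 0 := by
    ext n
    have := congrFun h n
    rw [polyMulSeq_coeff] at this
    simpa using this
  rcases mul_eq_zero.mp hps with h1 | h2
  · exact hp (Polynomial.coe_eq_zero_iff.mp h1)
  · apply hf
    funext n
    have := congrArg (PowerSeries.coeff n) h2
    simpa using this

lemma memHw_add (hω : ∀ k, 0 ≤ ω k) (ha : MemHw ω a) (hb : MemHw ω b) :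
    MemHw ω (a + b) := by
  refine Summable.of_nonneg_of_le (fun k => ?_) (fun k => ?_)
    ((ha.mul_left 2).add (hb.mul_left 2))
  · exact mul_nonneg (sq_nonneg _) (hω k)
  · have h1 : ‖(a + b) k‖ ≤ ‖a k‖ + ‖b k‖ := norm_add_le _ _
    have h2 : (0:ℝ) ≤ ‖(a+b) k‖ := norm_nonneg _
    have h3 : ‖(a + b) k‖ ^ 2 ≤ 2 * ‖a k‖^2 + 2 * ‖b k‖^2 := by
      nlinarith [sq_nonneg (‖a k‖ - ‖b k‖), mul_self_le_mul_self h2 h1,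
        norm_nonneg (a k), norm_nonneg (b k)]
    nlinarith [mul_le_mul_of_nonneg_right h3 (hω k)]

lemma memHw_smul (c : ℂ) (ha : MemHw ω a) : MemHw ω (c • a) := by
  have : (fun k => ‖(c • a) k‖ ^ 2 * ω k) = fun k => ‖c‖^2 * (‖a k‖ ^ 2 * ω k) := by
    funext k; simp [norm_smul]; ring
  rw [MemHw, this]
  exact ha.mul_left _

lemma memHw_neg (ha : MemHw ω a) : MemHw ω (-a) := by
  simpa [MemHw] using ha

lemma memHw_sub (hω : ∀ k, 0 ≤ ω k) (ha : MemHw ω a) (hb : MemHw ω b) :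
    MemHw ω (a - b) := by
  have := memHw_add hω ha (memHw_neg hb)
  simpa [sub_eq_add_neg] using this

lemma memHw_oneSeq : MemHw ω oneSeq := by
  apply summable_of_ne_finset_zero (s := {0})
  intro k hk
  simp at hk
  simp [oneSeq, hk]

lemma summable_shift_aux {C : ℝ} (hC : ∀ k, ω (k+1) ≤ C * ω k) (hωpos : ∀ k, 0 < ω k)
    (hf : MemHw ω f) :
    Summable (fun k => ‖f k‖ ^ 2 * ω (k + 1)) := by
  refine Summable.of_nonneg_of_le (fun k => ?_) (fun k => ?_) (hf.mul_left C)
  · have h1 := (hωpos (k+1)).le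
    positivity
  · have h2 := mul_le_mul_of_nonneg_left (hC k) (sq_nonneg ‖f k‖)
    nlinarith

lemma memHw_shift {C : ℝ} (hC : ∀ k, ω (k+1) ≤ C * ω k) (hωpos : ∀ k, 0 < ω k)
    (hf : MemHw ω f) : MemHw ω (shiftSeq f) := by
  rw [MemHw, ← summable_nat_add_iff 1]
  simpa [shiftSeq] using summable_shift_aux hC hωpos hf

lemma memHw_polyMulSeq {C : ℝ} (hC : ∀ k, ω (k+1) ≤ C * ω k) (hωpos : ∀ k, 0 < ω k)
    (p : Polynomial ℂ) (hf : MemHw ω f) : MemHw ω (polyMulSeq p f) := by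
  induction p using Polynomial.induction_on' with
  | add p q hp hq => rw [polyMulSeq_add]; exact memHw_add (fun k => (hωpos k).le) hp hq
  | monomial m c =>
      induction m with
      | zero => rw [Polynomial.monomial_zero_left, polyMulSeq_C]; exact memHw_smul c hf
      | succ m ih =>
          rw [← Polynomial.X_mul_monomial, polyMulSeq_X_mul]
          exact memHw_shift hC hωpos ih

lemma memHw_inner_summable (hω : ∀ k, 0 ≤ ω k) (ha : MemHw ω a) (hb : MemHw ω b) :
    Summable (fun k => a k * (starRingEnd ℂ) (b k) * (ω k : ℂ)) := by
  apply Summable.of_norm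
  refine Summable.of_nonneg_of_le (fun k => norm_nonneg _) (fun k => ?_)
    ((ha.add hb).div_const 2)
  have hnorm : ‖a k * (starRingEnd ℂ) (b k) * (ω k : ℂ)‖ = ‖a k‖ * ‖b k‖ * ω k := by
    simp [norm_mul, Complex.norm_real, abs_of_nonneg (hω k)]
  rw [hnorm]
  have := hω k
  nlinarith [sq_nonneg (‖a k‖ - ‖b k‖), norm_nonneg (a k), norm_nonneg (b k)]

lemma wNormSq_nonneg (hω : ∀ k, 0 ≤ ω k) (a : ℕ → ℂ) : 0 ≤ wNormSq ω a :=
  tsum_nonneg (fun k => mul_nonneg (sq_nonneg _) (hω k))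

lemma wNormSq_pos (hωpos : ∀ k, 0 < ω k) (ha : MemHw ω a) (hane : a ≠ 0) :
    0 < wNormSq ω a := by
  obtain ⟨k, hk⟩ : ∃ k, a k ≠ 0 := by
    by_contra h
    push_neg at h
    exact hane (funext h)
  have hpos : 0 < ‖a k‖ ^ 2 * ω k := by
    have h1 : 0 < ‖a k‖ := norm_pos_iff.mpr hk
    have h2 := hωpos k
    positivity
  calc 0 < ‖a k‖ ^ 2 * ω k := hpos
    _ ≤ wNormSq ω a := Summable.le_tsum ha k (fun j _ => mul_nonneg (sq_nonneg _) (hωpos j).le)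

lemma wInner_sub_left (hω : ∀ k, 0 ≤ ω k) (ha : MemHw ω a) (hb : MemHw ω b)
    (hv : MemHw ω v) : wInner ω (a - b) v = wInner ω a v - wInner ω b v := by
  rw [wInner, wInner, wInner, ← Summable.tsum_sub (memHw_inner_summable hω ha hv)
    (memHw_inner_summable hω hb hv)]
  apply tsum_congr
  intro k
  have : (a - b) k = a k - b k := rfl
  rw [this]
  ring

lemma wInner_smul_left (c : ℂ) (a v : ℕ → ℂ) :
    wInner ω (c • a) v = c * wInner ω a v := by
  rw [wInner, wInner, ← tsum_mul_left]
  apply tsum_congr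
  intro k
  have : (c • a) k = c * a k := rfl
  rw [this]
  ring

lemma wInner_neg_left (a v : ℕ → ℂ) : wInner ω (-a) v = - wInner ω a v := by
  have h : -a = (-1 : ℂ) • a := by funext k; show -a k = (-1 : ℂ) * a k; ring
  rw [h, wInner_smul_left]
  ring

lemma wInner_comm (a b : ℕ → ℂ) : wInner ω a b = (starRingEnd ℂ) (wInner ω b a) := by
  rw [wInner, wInner]
  rw [show ((starRingEnd ℂ) (∑' k, b k * (starRingEnd ℂ) (a k) * (ω k : ℂ)))
      = ∑' k, (starRingEnd ℂ) (b k * (starRingEnd ℂ) (a k) * (ω k : ℂ)) by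
    simp only [starRingEnd_apply]
    exact tsum_star]
  apply tsum_congr
  intro k
  simp only [map_mul, Complex.conj_ofReal, RingHomCompTriple.comp_apply,
    RingHom.id_apply, Complex.conj_conj]
  ring

lemma wInner_self (ha : MemHw ω a) : wInner ω a a = (wNormSq ω a : ℂ) := by
  rw [wInner, wNormSq, Complex.ofReal_tsum]
  apply tsum_congr
  intro k
  rw [Complex.mul_conj, Complex.normSq_eq_norm_sq]
  push_cast
  ring

lemma wInner_oneSeq_shift (g : ℕ → ℂ) : wInner ω oneSeq (shiftSeq g) = 0 := by
  rw [wInner]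
  convert tsum_zero with k
  cases k with
  | zero => simp [oneSeq, shiftSeq]
  | succ m => simp [oneSeq, shiftSeq]

lemma wInner_oneSeq_left (hω0 : ω 0 = 1) (v : ℕ → ℂ) :
    wInner ω oneSeq v = (starRingEnd ℂ) (v 0) := by
  rw [wInner, tsum_eq_single 0]
  · simp [oneSeq, hω0]
  · intro k hk; simp [oneSeq, hk]

lemma wNormSq_add_smul (hω : ∀ k, 0 ≤ ω k) (ha : MemHw ω a) (hb : MemHw ω b) (c : ℂ) :
    wNormSq ω (a + c • b)
      = wNormSq ω a + 2 * ((starRingEnd ℂ) c * wInner ω a b).re + ‖c‖^2 * wNormSq ω b := by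
  have hsum : Summable (fun k => a k * (starRingEnd ℂ) (b k) * (ω k : ℂ)) :=
    memHw_inner_summable hω ha hb
  have hsum2 : Summable (fun k => (starRingEnd ℂ) c * (a k * (starRingEnd ℂ) (b k) * (ω k : ℂ))) :=
    hsum.mul_left _
  have hre : ((starRingEnd ℂ) c * wInner ω a b).re
      = ∑' k, ((starRingEnd ℂ) c * (a k * (starRingEnd ℂ) (b k) * (ω k : ℂ))).re := by
    rw [wInner, ← tsum_mul_left]
    exact (Complex.reCLM.map_tsum hsum2)
  have hptwise : ∀ k, ‖(a + c • b) k‖ ^ 2 * ω k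
      = ‖a k‖ ^ 2 * ω k + 2 * ((starRingEnd ℂ) c * (a k * (starRingEnd ℂ) (b k) * (ω k : ℂ))).re
        + ‖c‖^2 * (‖b k‖ ^ 2 * ω k) := by
    intro k
    have : (a + c • b) k = a k + c * b k := by simp
    rw [this]
    rw [show ‖a k + c * b k‖ ^ 2 = Complex.normSq (a k + c * b k) from by
        exact Complex.sq_norm _,
      Complex.normSq_add]
    simp [Complex.normSq_apply, Complex.mul_re, Complex.mul_im, Complex.conj_re,
      Complex.conj_im, Complex.sq_norm,
      Complex.normSq_apply, Complex.ofReal_re, Complex.ofReal_im]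
    ring
  have h2sum : Summable (fun k => ((starRingEnd ℂ) c * (a k * (starRingEnd ℂ) (b k) * (ω k : ℂ))).re) := by
    have := hsum2.map Complex.reCLM Complex.reCLM.continuous
    exact this
  rw [wNormSq, tsum_congr hptwise,
    Summable.tsum_add (ha.add (h2sum.mul_left 2)) ((hb.mul_left (‖c‖^2))),
    Summable.tsum_add ha (h2sum.mul_left 2), tsum_mul_left, tsum_mul_left, hre, wNormSq]
  rfl

lemma wNormSq_shift {C : ℝ} {g : ℕ → ℂ} (hC : ∀ k, ω (k+1) ≤ C * ω k)
    (hωpos : ∀ k, 0 < ω k) (hg : MemHw ω g) :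
    wNormSq ω (shiftSeq g) = ∑' k, ‖g k‖ ^ 2 * ω (k + 1) := by
  rw [wNormSq, Summable.tsum_eq_zero_add (memHw_shift hC hωpos hg)]
  simp [shiftSeq]

lemma opa_orthogonal {n : ℕ} {q : Polynomial ℂ} {C : ℝ} (hC : ∀ k, ω (k+1) ≤ C * ω k)
    (hωpos : ∀ k, 0 < ω k) (hf : MemHw ω f) (hq : IsOPA ω f n q)
    {p : Polynomial ℂ} (hp : p.natDegree ≤ n) :
    wInner ω (polyMulSeq q f - oneSeq) (polyMulSeq p f) = 0 := by
  have hωn : ∀ k, 0 ≤ ω k := fun k => (hωpos k).le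
  have hqf : MemHw ω (polyMulSeq q f) := memHw_polyMulSeq hC hωpos q hf
  have hwmem : MemHw ω (polyMulSeq p f) := memHw_polyMulSeq hC hωpos p hf
  have humem : MemHw ω (polyMulSeq q f - oneSeq) := memHw_sub hωn hqf memHw_oneSeq
  set u := polyMulSeq q f - oneSeq with hu
  set w := polyMulSeq p f with hw
  set I := wInner ω u w with hI
  set W := wNormSq ω w with hW
  have hWnn : 0 ≤ W := wNormSq_nonneg hωn w
  have key : ∀ c : ℂ, 0 ≤ 2 * ((starRingEnd ℂ) c * I).re + ‖c‖^2 * W := by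
    intro c
    have hdeg : (q + c • p).natDegree ≤ n :=
      le_trans (Polynomial.natDegree_add_le q (c • p))
        (max_le hq.1 (le_trans (Polynomial.natDegree_smul_le c p) hp))
    have h1 := hq.2 (q + c • p) hdeg
    have h2 : polyMulSeq (q + c • p) f - oneSeq = u + c • w := by
      rw [polyMulSeq_add, polyMulSeq_smul]
      funext k
      show polyMulSeq q f k + c * w k - oneSeq k = (polyMulSeq q f k - oneSeq k) + c * w k
      ring
    rw [h2, wNormSq_add_smul hωn humem hwmem c, ← hI, ← hW] at h1
    linarith
  by_contra hIne
  have hI2 : 0 < ‖I‖^2 := by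
    have : 0 < ‖I‖ := norm_pos_iff.mpr hIne
    positivity
  have hW1 : (0:ℝ) < W + 1 := by linarith
  set t : ℝ := -(1/(W+1)) with ht
  have hre : ((starRingEnd ℂ) (((t:ℝ):ℂ) * I) * I).re = t * ‖I‖^2 := by
    have h3 : (starRingEnd ℂ) (((t:ℝ):ℂ) * I) * I = ((t:ℝ):ℂ) * ((starRingEnd ℂ) I * I) := by
      rw [map_mul, Complex.conj_ofReal]; ring
    rw [h3, show (starRingEnd ℂ) I * I = ((‖I‖^2 : ℝ) : ℂ) by
      rw [mul_comm, Complex.mul_conj, Complex.normSq_eq_norm_sq],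
      show (((t:ℝ):ℂ)) * ((‖I‖^2:ℝ):ℂ) = (((t * ‖I‖^2 :ℝ)):ℂ) by push_cast; ring]
    exact Complex.ofReal_re _
  have hnc : ‖((t:ℝ):ℂ) * I‖^2 = t^2 * ‖I‖^2 := by
    rw [norm_mul, Complex.norm_real, Real.norm_eq_abs, mul_pow, sq_abs]
  have hk := key (((t:ℝ):ℂ) * I)
  rw [hre, hnc] at hk
  have hneg : 2*t + t^2*W < 0 := by
    have h4 : 2*t + t^2*W = (-(W+2))/(W+1)^2 := by
      rw [ht]; field_simp; ring
    rw [h4]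
    apply div_neg_of_neg_of_pos
    · linarith
    · positivity
  nlinarith [mul_pos hI2 (neg_pos.mpr hneg)]

end aux

/-- With non-decreasing weights, every zero of every opa has modulus at least 1. -/
theorem stmt_10 (ω : ℕ → ℝ) (hω0 : ω 0 = 1) (hωpos : ∀ k, 0 < ω k)
    (hmono : Monotone ω)
    (hratio : Tendsto (fun k => ω k / ω (k + 1)) atTop (nhds 1))
    (f : ℕ → ℂ) (hf : MemHw ω f) (hf0 : f ≠ 0) (hf00 : f 0 ≠ 0)
    (n : ℕ) (q : Polynomial ℂ) (hq : IsOPA ω f n q)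
    (z₁ : ℂ) (hz : q.eval z₁ = 0) :
    1 ≤ ‖z₁‖ := by
  by_contra hlt
  push_neg at hlt
  have hωn : ∀ k, 0 ≤ ω k := fun k => (hωpos k).le
  have h2 : Tendsto (fun k => ω (k+1) / ω k) atTop (nhds 1) := by
    have h3 := hratio.inv₀ one_ne_zero
    simp only [inv_div, inv_one] at h3
    exact h3
  obtain ⟨Cb, hCb⟩ := h2.bddAbove_range
  have hC : ∀ k, ω (k+1) ≤ Cb * ω k := by
    intro k
    have h3 : ω (k+1)/ω k ≤ Cb := hCb (Set.mem_range_self k)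
    rw [div_le_iff₀ (hωpos k)] at h3
    linarith
  obtain ⟨r, hqr⟩ := Polynomial.dvd_iff_isRoot.mpr hz
  by_cases hr : r = 0
  · -- then q = 0, contradicting optimality via the constant polynomial 1
    have hq0 : q = 0 := by rw [hqr, hr, mul_zero]
    have h4 := opa_orthogonal hC hωpos hf hq (p := 1)
      (by rw [Polynomial.natDegree_one]; exact Nat.zero_le n)
    rw [hq0] at h4
    have h5 : polyMulSeq 0 f = 0 := by funext k; simp [polyMulSeq]
    have h6 : polyMulSeq 1 f = f := by
      rw [← Polynomial.C_1, polyMulSeq_C, one_smul]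
    rw [h5, h6, zero_sub, wInner_neg_left, wInner_oneSeq_left hω0, neg_eq_zero] at h4
    exact hf00 (by simpa using congrArg (starRingEnd ℂ) h4)
  · set g := polyMulSeq r f with hgdef
    have hgmem : MemHw ω g := memHw_polyMulSeq hC hωpos r hf
    have hsg : MemHw ω (shiftSeq g) := memHw_shift hC hωpos hgmem
    have hgne : g ≠ 0 := polyMulSeq_ne_zero hr hf0
    have hGpos : 0 < wNormSq ω g := wNormSq_pos hωpos hgmem hgne
    have hGS : wNormSq ω g ≤ wNormSq ω (shiftSeq g) := by
      rw [wNormSq_shift hC hωpos hgmem, wNormSq]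
      exact Summable.tsum_le_tsum
        (fun k => mul_le_mul_of_nonneg_left (hmono (Nat.le_succ k)) (sq_nonneg _))
        hgmem (summable_shift_aux hC hωpos hgmem)
    have hXr : (X * r).natDegree ≤ n := by
      have h5 : q.natDegree = 1 + r.natDegree := by
        rw [hqr, Polynomial.natDegree_mul (Polynomial.X_sub_C_ne_zero z₁) hr,
          Polynomial.natDegree_X_sub_C]
      have h6 : (X * r).natDegree = 1 + r.natDegree := by
        rw [Polynomial.natDegree_mul Polynomial.X_ne_zero hr, Polynomial.natDegree_X]
      rw [h6, ← h5]; exact hq.1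
    have hshift : polyMulSeq (X * r) f = shiftSeq g := polyMulSeq_X_mul r f
    have hqf : polyMulSeq q f = shiftSeq g - z₁ • g := by
      rw [hqr, show (X - C z₁) * r = X * r - C z₁ * r by ring, polyMulSeq_sub, hshift,
        ← Polynomial.smul_eq_C_mul, polyMulSeq_smul]
    have hortho := opa_orthogonal hC hωpos hf hq hXr
    rw [hshift, hqf] at hortho
    have hz1g : MemHw ω (z₁ • g) := memHw_smul _ hgmem
    rw [wInner_sub_left hωn (memHw_sub hωn hsg hz1g) memHw_oneSeq hsg,
      wInner_sub_left hωn hsg hz1g hsg, wInner_smul_left,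
      wInner_oneSeq_shift, wInner_self hsg, sub_zero,
      wInner_comm g (shiftSeq g)] at hortho
    -- hortho : ↑S - z₁ * conj P = 0
    have hconj : (starRingEnd ℂ) z₁ * wInner ω (shiftSeq g) g
        = ((wNormSq ω (shiftSeq g) : ℝ) : ℂ) := by
      have h7 := congrArg (starRingEnd ℂ) hortho
      simp only [map_sub, map_mul, Complex.conj_conj, Complex.conj_ofReal, map_zero] at h7
      linear_combination -h7
    have hnn := wNormSq_nonneg hωn (shiftSeq g + (-z₁) • g)
    rw [wNormSq_add_smul hωn hsg hgmem (-z₁)] at hnn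
    have hre : ((starRingEnd ℂ) (-z₁) * wInner ω (shiftSeq g) g).re
        = -(wNormSq ω (shiftSeq g)) := by
      rw [map_neg, neg_mul, hconj]
      simp
    rw [hre, norm_neg] at hnn
    have habs : ‖z₁‖ < 1 := by exact hlt
    have h7 : ‖z₁‖^2 < 1 := by nlinarith [norm_nonneg z₁]
    nlinarith [hnn, hGS, hGpos, mul_pos hGpos (by linarith : (0:ℝ) < 1 - ‖z₁‖^2)]
end
end
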